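/- arXiv:0804.1883 — 2 statements merged into one kernel-verified Lean document; each statement's English description precedes it below -/
import Mathlib

section
/- Let (a_k) be a sequence of positive reals with a_k → 0 and A_n := ∑_{k=1}^n a_k → ∞. Define σ_k := c a_{k+1} exp(−A_k) where c > 0 normalizes ∑_k σ_k = 1. Then (i) the series ∑_k a_{k+1} exp(−A_k) converges (so c exists), since a_{k+1} exp(−A_k) ∼ exp(−A_k) − exp(−A_{k+1}); (ii) the tails T_n := ∑_{k=n}^∞ σ_k satisfy T_n ∼ c exp(−A_{n−1}) as n → ∞; and (iii) σ_n / T_n ∼ a_{n+1}. -/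
open Filter Real
open scoped Topology

/-- Let `(a k)_{k≥1}` be positive with `a k → 0` and `A n = ∑_{k=1}^n a k → ∞`. Define
`σ k = c * a (k+1) * exp (−A k)` with `c` the normalizing constant. Then (i) the series
`∑ a (k+1) exp (−A k)` converges; (ii) the tails `T n = ∑_{k ≥ n} σ k` satisfy
`T n ∼ c exp (−A (n−1))`; and (iii) `σ n / T n ∼ a (n+1)`. -/
theorem stmt10
    (a : ℕ → ℝ) (ha : ∀ k, 1 ≤ k → 0 < a k)
    (ha0 : Tendsto a atTop (𝓝 0))
    (A : ℕ → ℝ) (hA : ∀ n, A n = ∑ k ∈ Finset.Icc 1 n, a k)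
    (hAtop : Tendsto A atTop atTop) :
    Summable (fun k => a (k + 1) * Real.exp (-A k)) ∧
    ∀ c : ℝ, 0 < c →
      (∑' k : ℕ, (if 1 ≤ k then c * a (k + 1) * Real.exp (-A k) else 0)) = 1 →
      (Tendsto (fun n : ℕ =>
          (∑' j : ℕ, c * a (n + j + 1) * Real.exp (-A (n + j)))
            / (c * Real.exp (-A (n - 1)))) atTop (𝓝 1)) ∧
      Tendsto (fun n : ℕ =>
          (c * a (n + 1) * Real.exp (-A n))
            / ((∑' j : ℕ, c * a (n + j + 1) * Real.exp (-A (n + j))) * a (n + 1)))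
        atTop (𝓝 1) := by
  have hpos : ∀ k : ℕ, 0 < a (k + 1) := fun k => ha _ (Nat.le_add_left 1 k)
  set E : ℕ → ℝ := fun n => Real.exp (-A n) with hEdef
  have hErw : ∀ m : ℕ, Real.exp (-A m) = E m := fun _ => rfl
  have hEpos : ∀ n, 0 < E n := fun n => Real.exp_pos _
  have hAsucc : ∀ n : ℕ, A (n + 1) = A n + a (n + 1) := by
    intro n
    rw [hA, hA, Finset.sum_Icc_succ_top (Nat.le_add_left 1 n)]
  have hEsucc : ∀ n : ℕ, E (n + 1) = E n * Real.exp (-a (n + 1)) := by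
    intro n
    simp only [hEdef]
    rw [hAsucc n, neg_add, Real.exp_add]
  have hdec : ∀ n : ℕ, E (n + 1) ≤ E n := by
    intro n
    have h1 : Real.exp (-a (n + 1)) ≤ 1 := Real.exp_le_one_iff.2 (by linarith [hpos n])
    have h2 := (hEpos n).le
    rw [hEsucc n]
    nlinarith
  have key1 : ∀ n : ℕ, E n - E (n + 1) ≤ a (n + 1) * E n := by
    intro n
    have h := Real.add_one_le_exp (-a (n + 1))
    rw [hEsucc n]
    nlinarith [hEpos n]
  have key2 : ∀ n : ℕ, a (n + 1) * E n ≤ Real.exp (a (n + 1)) * (E n - E (n + 1)) := by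
    intro n
    have h := Real.add_one_le_exp (a (n + 1))
    have hx : Real.exp (-a (n + 1)) * Real.exp (a (n + 1)) = 1 := by
      rw [← Real.exp_add]; simp
    rw [hEsucc n]
    nlinarith [hEpos n, Real.exp_pos (a (n + 1)), hpos n]
  -- E tends to 0
  have hE0 : Tendsto E atTop (𝓝 0) := by
    have : Tendsto (fun n => -A n) atTop atBot := tendsto_neg_atBot_iff.2 hAtop
    exact Real.tendsto_exp_atBot.comp this
  -- telescoping sums
  have htel : ∀ n : ℕ, HasSum (fun j => E (n + j) - E (n + j + 1)) (E n) := by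
    intro n
    have hnn : ∀ j : ℕ, 0 ≤ E (n + j) - E (n + j + 1) := fun j => sub_nonneg.2 (hdec _)
    have hsum : ∀ m : ℕ, ∑ j ∈ Finset.range m, (E (n + j) - E (n + j + 1)) = E n - E (n + m) :=
      fun m => Finset.sum_range_sub' (fun j => E (n + j)) m
    have hsummable : Summable (fun j => E (n + j) - E (n + j + 1)) := by
      apply summable_of_sum_range_le hnn
      intro m
      rw [hsum]
      linarith [(hEpos (n + m)).le]
    have h2 := hsummable.hasSum.tendsto_sum_nat
    have h3 : Tendsto (fun m => E n - E (n + m)) atTop (𝓝 (E n - 0)) := by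
      apply Tendsto.const_sub
      have := hE0.comp (tendsto_add_atTop_nat n)
      exact this.congr (fun m => by simp [Nat.add_comm])
    rw [sub_zero] at h3
    have h4 : Tendsto (fun m => ∑ j ∈ Finset.range m, (E (n + j) - E (n + j + 1))) atTop
        (𝓝 (E n)) := by
      exact h3.congr (fun m => (hsum m).symm)
    have := tendsto_nhds_unique h2 h4
    rw [← this]
    exact hsummable.hasSum
  -- summability of the main series
  obtain ⟨N, hN⟩ := (Metric.tendsto_atTop.1 ha0) 1 one_pos
  have hN1 : ∀ k, N ≤ k → a k ≤ 1 := by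
    intro k hk
    have := hN k hk
    rw [Real.dist_eq, sub_zero] at this
    exact (le_abs_self _).trans this.le
  have summable_i : Summable (fun k => a (k + 1) * E k) := by
    rw [← summable_nat_add_iff N]
    have hRHS : Summable (fun j => Real.exp 1 * (E (j + N) - E (j + N + 1))) := by
      apply (((htel N).summable).mul_left (Real.exp 1)).congr
      intro j
      rw [Nat.add_comm N j]
    apply Summable.of_nonneg_of_le _ _ hRHS
    · intro j
      exact mul_nonneg (hpos _).le (hEpos _).le
    · intro j
      refine (key2 (j + N)).trans ?_
      apply mul_le_mul_of_nonneg_right _ (sub_nonneg.2 (hdec _))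
      exact Real.exp_le_exp.2 (hN1 (j + N + 1) (by omega))
  -- define tails S n
  set S : ℕ → ℝ := fun n => ∑' j : ℕ, a (n + j + 1) * E (n + j) with hSdef
  have sfn : ∀ n : ℕ, Summable (fun j => a (n + j + 1) * E (n + j)) := by
    intro n
    apply ((summable_nat_add_iff n).2 summable_i).congr
    intro j
    rw [Nat.add_comm j n]
  have hlow : ∀ n, E n ≤ S n := by
    intro n
    have := Summable.tsum_le_tsum (fun j => key1 (n + j)) (htel n).summable (sfn n)
    rwa [(htel n).tsum_eq] at this
  have hupp : ∀ δ : ℝ, ∀ n : ℕ, (∀ j : ℕ, a (n + j + 1) ≤ δ) → S n ≤ Real.exp δ * E n := by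
    intro δ n hδ
    have h1 : ∀ j : ℕ, a (n + j + 1) * E (n + j) ≤ Real.exp δ * (E (n + j) - E (n + j + 1)) := by
      intro j
      refine (key2 (n + j)).trans ?_
      exact mul_le_mul_of_nonneg_right (Real.exp_le_exp.2 (hδ j)) (sub_nonneg.2 (hdec _))
    calc S n ≤ ∑' j : ℕ, Real.exp δ * (E (n + j) - E (n + j + 1)) :=
          Summable.tsum_le_tsum h1 (sfn n) (((htel n).summable).mul_left _)
      _ = Real.exp δ * E n := by rw [tsum_mul_left, (htel n).tsum_eq]
  -- main limit
  have L : Tendsto (fun n => S n / E n) atTop (𝓝 1) := by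
    rw [Metric.tendsto_atTop]
    intro ε hε
    set δ := Real.log (1 + ε / 2) with hδdef
    have hδpos : 0 < δ := Real.log_pos (by linarith)
    obtain ⟨M, hM⟩ := (Metric.tendsto_atTop.1 ha0) δ hδpos
    refine ⟨M, fun n hn => ?_⟩
    have hb : ∀ j : ℕ, a (n + j + 1) ≤ δ := by
      intro j
      have := hM (n + j + 1) (by omega)
      rw [Real.dist_eq, sub_zero] at this
      exact (le_abs_self _).trans this.le
    have h1 := hlow n
    have h2 := hupp δ n hb
    rw [hδdef, Real.exp_log (by linarith)] at h2
    have hE := hEpos n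
    have hge : 1 ≤ S n / E n := (one_le_div hE).2 h1
    have hle : S n / E n ≤ 1 + ε / 2 := (div_le_iff₀ hE).2 (by linarith)
    rw [Real.dist_eq, abs_lt]
    constructor <;> linarith
  -- conclusion
  refine ⟨summable_i, fun c hc _ => ?_⟩
  have hcne : c ≠ 0 := hc.ne'
  have hT : ∀ n : ℕ, (∑' j : ℕ, c * a (n + j + 1) * E (n + j)) = c * S n := by
    intro n
    simp only [hSdef, mul_assoc]
    exact tsum_mul_left
  have hexp1 : Tendsto (fun n : ℕ => Real.exp (-a n)) atTop (𝓝 1) := by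
    have : Tendsto (fun n : ℕ => -a n) atTop (𝓝 (-0)) := ha0.neg
    rw [neg_zero] at this
    have := (Real.continuous_exp.tendsto 0).comp this
    simpa [Function.comp_def] using this
  constructor
  · -- part (ii)
    simp only [hErw, hT]
    have hmain : Tendsto (fun n : ℕ => S n / E n * Real.exp (-a n)) atTop (𝓝 1) := by
      have := L.mul hexp1
      simpa using this
    apply hmain.congr'
    filter_upwards [eventually_ge_atTop 1] with n hn
    have hn1 : n - 1 + 1 = n := Nat.succ_pred_eq_of_pos hn
    have hEn : E n = E (n - 1) * Real.exp (-a n) := by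
      have := hEsucc (n - 1)
      rwa [hn1] at this
    rw [mul_div_mul_left _ _ hcne]
    rw [div_mul_eq_mul_div, hEn]
    rw [eq_div_iff (hEpos (n - 1)).ne']
    field_simp
    ring_nf
    exact mul_inv_cancel_right₀ (hEpos (n - 1)).ne' _
  · -- part (iii)
    simp only [hErw, hT]
    have L' : Tendsto (fun n => E n / S n) atTop (𝓝 1) := by
      have := L.inv₀ one_ne_zero
      simp only [inv_div] at this
      simpa using this
    apply L'.congr
    intro n
    have hSpos : 0 < S n := lt_of_lt_of_le (hEpos n) (hlow n)
    rw [show c * S n * a (n + 1) = c * a (n + 1) * S n by ring]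
    rw [mul_div_mul_left _ _ (mul_ne_zero hcne (hpos n).ne')]
end

section
/- Let (d_n) and (ϑ_n) be monotone positive sequences with d_n ≍ d_{2n}, ϑ_n ≍ ϑ_{2n}, and ∑_n d_n^{−α}/n < ∞ for some α ∈ (0,2). Set A_n ⊆ [0,1] pairwise disjoint with |A_n| = c d_n^{−α} n^{−1} (c > 0 small enough that ∑_n |A_n| ≤ 1). Then such disjoint sets exist, and |A_n|^{−1/α} n^{−1/α} = c^{−1/α} d_n, so that if e_n(u) ≍ ϑ_n n^{1/α−1/p'} and e_n(u_∞) ≍ ϑ_n |A_n|^{−1/α} n^{−1/p'} (the Kühn diagonal entropy asymptotics under the stated regularity conditions), then e_n(u_∞)/e_n(u) ≍ d_n. -/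
open MeasureTheory Filter
open scoped ENNReal Topology

/-- Let `(d n)` and `(ϑ n)` be monotone positive sequences with `d n ≍ d (2n)`,
`ϑ n ≍ ϑ (2n)` and `∑ d n^(−α)/n < ∞` for some `α ∈ (0,2)`. Then there exist `c > 0` and
pairwise disjoint measurable sets `A n ⊆ [0,1]` with `|A n| = c d n^(−α) n^(−1)`; one has
`|A n|^(−1/α) n^(−1/α) = c^(−1/α) d n`; and whenever `e n (u) ≍ ϑ n n^(1/α−1/p')` and
`e n (u_∞) ≍ ϑ n |A n|^(−1/α) n^(−1/p')` (the Kühn diagonal entropy asymptotics),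
the entropy gap satisfies `e n (u_∞) / e n (u) ≍ d n`. -/
theorem stmt19
    {α : ℝ} (hα0 : 0 < α) (hα2 : α < 2)
    (d ϑ : ℕ → ℝ) (hdpos : ∀ n, 1 ≤ n → 0 < d n) (hϑpos : ∀ n, 1 ≤ n → 0 < ϑ n)
    (hdmono : Monotone d ∨ Antitone d) (hϑmono : Monotone ϑ ∨ Antitone ϑ)
    (hddoub : ∃ C : ℝ, 0 < C ∧ ∀ n, 1 ≤ n → d (2 * n) ≤ C * d n ∧ d n ≤ C * d (2 * n))
    (hϑdoub : ∃ C : ℝ, 0 < C ∧ ∀ n, 1 ≤ n → ϑ (2 * n) ≤ C * ϑ n ∧ ϑ n ≤ C * ϑ (2 * n))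
    (hsum : Summable fun n : ℕ => d (n + 1) ^ (-α) / (n + 1)) :
    ∃ c : ℝ, 0 < c ∧
      (∃ A : ℕ → Set ℝ, (∀ n, MeasurableSet (A n)) ∧
        (∀ n, 1 ≤ n → A n ⊆ Set.Icc (0 : ℝ) 1) ∧
        Pairwise (Function.onFun Disjoint A) ∧
        ∀ n, 1 ≤ n → volume (A n) = ENNReal.ofReal (c * d n ^ (-α) / n)) ∧
      (∀ n : ℕ, 1 ≤ n →
        (c * d n ^ (-α) / n) ^ (-(1 / α)) * (n : ℝ) ^ (-(1 / α))
          = c ^ (-(1 / α)) * d n) ∧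
      ∀ (p' : ℝ) (en enInf : ℕ → ℝ),
        (∃ c₁ c₂ : ℝ, 0 < c₁ ∧ 0 < c₂ ∧ ∀ᶠ n : ℕ in atTop,
          c₁ * (ϑ n * (n : ℝ) ^ (1 / α - 1 / p')) ≤ en n ∧
          en n ≤ c₂ * (ϑ n * (n : ℝ) ^ (1 / α - 1 / p'))) →
        (∃ c₁ c₂ : ℝ, 0 < c₁ ∧ 0 < c₂ ∧ ∀ᶠ n : ℕ in atTop,
          c₁ * (ϑ n * (c * d n ^ (-α) / n) ^ (-(1 / α)) * (n : ℝ) ^ (-(1 / p')))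
            ≤ enInf n ∧
          enInf n ≤ c₂ * (ϑ n * (c * d n ^ (-α) / n) ^ (-(1 / α)) * (n : ℝ) ^ (-(1 / p')))) →
        ∃ c₁ c₂ : ℝ, 0 < c₁ ∧ 0 < c₂ ∧ ∀ᶠ n : ℕ in atTop,
          c₁ * d n ≤ enInf n / en n ∧ enInf n / en n ≤ c₂ * d n := by
  classical
  have hα : α ≠ 0 := ne_of_gt hα0
  set S : ℝ := ∑' n : ℕ, d (n + 1) ^ (-α) / (n + 1) with hSdef
  have hterm : ∀ n : ℕ, 0 < d (n + 1) ^ (-α) / ((n : ℝ) + 1) := by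
    intro n
    have hd := hdpos (n + 1) (Nat.le_add_left 1 n)
    positivity
  have hSpos : 0 < S := hsum.tsum_pos (fun n => (hterm n).le) 0 (hterm 0)
  set c : ℝ := 1 / S with hcdef
  have hc : 0 < c := by positivity
  set g : ℕ → ℝ := fun n => c * d n ^ (-α) / n with hgdef
  have hg0 : g 0 = 0 := by simp [hgdef]
  have hgpos : ∀ n, 1 ≤ n → 0 < g n := by
    intro n hn
    have hd := hdpos n hn
    have hn' : (0 : ℝ) < n := by exact_mod_cast hn
    simp only [hgdef]
    positivity
  have hgnonneg : ∀ n, 0 ≤ g n := by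
    intro n
    rcases Nat.eq_zero_or_pos n with h | h
    · simp [h, hg0]
    · exact (hgpos n h).le
  have hrewg : ∀ n : ℕ, g (n + 1) = c * (d (n + 1) ^ (-α) / ((n : ℝ) + 1)) := by
    intro n
    simp only [hgdef]
    push_cast
    ring
  have hgsucc : Summable fun n : ℕ => g (n + 1) := by
    have : (fun n : ℕ => g (n + 1)) = fun n => c * (d (n + 1) ^ (-α) / ((n : ℝ) + 1)) := by
      funext n; exact hrewg n
    rw [this]
    exact hsum.mul_left c
  have hgsum : Summable g := (summable_nat_add_iff 1).mp hgsucc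
  have htsum : ∑' n, g n = 1 := by
    rw [hgsum.tsum_eq_zero_add, hg0, zero_add]
    have h1 : ∑' n : ℕ, g (n + 1) = c * S := by
      rw [hSdef, ← tsum_mul_left]
      exact tsum_congr hrewg
    rw [h1, hcdef]
    field_simp
  set t : ℕ → ℝ := fun n => ∑ k ∈ Finset.range n, g k with htdef
  have htmono : Monotone t := fun a b hab =>
    Finset.sum_le_sum_of_subset_of_nonneg (Finset.range_subset_range.mpr hab)
      (fun i _ _ => hgnonneg i)
  have htnonneg : ∀ n, 0 ≤ t n := fun n => Finset.sum_nonneg fun i _ => hgnonneg i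
  have htsucc : ∀ n, t (n + 1) = t n + g n := fun n => Finset.sum_range_succ g n
  have ht_le : ∀ n, t (n + 1) ≤ 1 := by
    intro n
    rw [← htsum]
    exact hgsum.sum_le_tsum (Finset.range (n + 1)) (fun i _ => hgnonneg i)
  set A : ℕ → Set ℝ := fun n => Set.Ico (t n) (t n + g n) with hAdef
  have hdisj : ∀ m n : ℕ, m < n → Disjoint (A m) (A n) := by
    intro m n hmn
    have key : t m + g m ≤ t n := by
      rw [← htsucc m]
      exact htmono hmn
    refine Set.disjoint_left.mpr fun x hx hx' => ?_
    have h1 := hx.2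
    have h2 := hx'.1
    linarith
  have hid : ∀ n : ℕ, 1 ≤ n →
      (c * d n ^ (-α) / n) ^ (-(1 / α)) * (n : ℝ) ^ (-(1 / α)) = c ^ (-(1 / α)) * d n := by
    intro n hn
    have hd := hdpos n hn
    have hn' : (0 : ℝ) < n := by exact_mod_cast hn
    have h1 : (d n ^ (-α)) ^ (-(1 / α)) = d n := by
      rw [← Real.rpow_mul hd.le, show -α * -(1 / α) = 1 by field_simp, Real.rpow_one]
    have hne : (n : ℝ) ^ (-(1 / α)) ≠ 0 := (Real.rpow_pos_of_pos hn' _).ne'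
    rw [Real.div_rpow (by positivity) hn'.le, div_mul_cancel₀ _ hne,
      Real.mul_rpow hc.le (by positivity), h1]
  refine ⟨c, hc, ⟨A, fun n => measurableSet_Ico, ?_, ?_, ?_⟩, hid, ?_⟩
  · -- subsets of [0,1]
    intro n _ x hx
    refine ⟨le_trans (htnonneg n) hx.1, le_trans hx.2.le ?_⟩
    rw [← htsucc n]
    exact ht_le n
  · -- pairwise disjoint
    intro m n hmn
    rcases lt_or_gt_of_ne hmn with h | h
    · exact hdisj m n h
    · exact (hdisj n m h).symm
  · -- volume
    intro n hn
    simp only [hAdef, Real.volume_Ico, add_sub_cancel_left, hgdef]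
  · -- the ratio asymptotics
    rintro p' en enInf ⟨a₁, a₂, ha₁, ha₂, hen⟩ ⟨b₁, b₂, hb₁, hb₂, henInf⟩
    have hcpow : 0 < c ^ (-(1 / α)) := Real.rpow_pos_of_pos hc _
    refine ⟨b₁ * c ^ (-(1 / α)) / a₂, b₂ * c ^ (-(1 / α)) / a₁, by positivity, by positivity, ?_⟩
    filter_upwards [hen, henInf, eventually_ge_atTop 1] with n h1 h2 hn
    have hd := hdpos n hn
    have hϑ := hϑpos n hn
    have hn' : (0 : ℝ) < n := by exact_mod_cast hn
    set X : ℝ := ϑ n * (n : ℝ) ^ (1 / α - 1 / p') with hX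
    have hXpos : 0 < X := by positivity
    have hLrw : (c * d n ^ (-α) / n) ^ (-(1 / α))
        = c ^ (-(1 / α)) * d n * (n : ℝ) ^ (1 / α) := by
      have h := hid n hn
      have hpow : (n : ℝ) ^ (-(1 / α)) * (n : ℝ) ^ (1 / α) = 1 := by
        rw [← Real.rpow_add hn', neg_add_cancel, Real.rpow_zero]
      calc (c * d n ^ (-α) / n) ^ (-(1 / α))
          = (c * d n ^ (-α) / n) ^ (-(1 / α)) *
            ((n : ℝ) ^ (-(1 / α)) * (n : ℝ) ^ (1 / α)) := by rw [hpow, mul_one]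
        _ = ((c * d n ^ (-α) / n) ^ (-(1 / α)) * (n : ℝ) ^ (-(1 / α))) *
            (n : ℝ) ^ (1 / α) := by ring
        _ = c ^ (-(1 / α)) * d n * (n : ℝ) ^ (1 / α) := by rw [h]
    have hrw : ϑ n * (c * d n ^ (-α) / n) ^ (-(1 / α)) * (n : ℝ) ^ (-(1 / p'))
        = c ^ (-(1 / α)) * d n * X := by
      rw [hLrw, hX, show (1 : ℝ) / α - 1 / p' = 1 / α + -(1 / p') by ring,
        Real.rpow_add hn']
      ring
    rw [hrw] at h2
    have henpos : 0 < en n := lt_of_lt_of_le (by positivity) h1.1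
    have henInfpos : 0 < enInf n := lt_of_lt_of_le (by positivity) h2.1
    constructor
    · have heq : b₁ * c ^ (-(1 / α)) / a₂ * d n
          = b₁ * (c ^ (-(1 / α)) * d n * X) / (a₂ * X) := by
        field_simp
      rw [heq]
      exact div_le_div₀ henInfpos.le h2.1 henpos h1.2
    · have heq : b₂ * c ^ (-(1 / α)) / a₁ * d n
          = b₂ * (c ^ (-(1 / α)) * d n * X) / (a₁ * X) := by
        field_simp
      rw [heq]
      exact div_le_div₀ (by positivity) h2.2 (by positivity) h1.1
end
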